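/- Let X be a finite simple graph on n vertices with at least one edge, with minimal degree δ, maximal degree Δ, and largest Laplacian eigenvalue λ_max, and let α' be the independence number of the derived graph X'. Then the real function b(λ) = n(1 − Δ/λ) + α'(Δ − δ)/(λ − δ) is strictly increasing on the interval [λ_max, ∞). -/

import Mathlib

open Finset

/-- The independence number: the largest size of a set of pairwise non-adjacent vertices. -/
noncomputable def indepNum {V : Type*} (G : SimpleGraph V) : ℕ :=
  sSup {n | ∃ s : Finset V, (∀ v ∈ s, ∀ w ∈ s, ¬ G.Adj v w) ∧ s.card = n}

/-- The degree of a vertex: the number of its neighbours. -/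
noncomputable def deg {V : Type*} (G : SimpleGraph V) (v : V) : ℕ :=
  (G.neighborSet v).ncard

/-- The minimal degree. -/
noncomputable def minDeg {V : Type*} (G : SimpleGraph V) : ℕ :=
  sInf (Set.range (deg G))

/-- The maximal degree. -/
noncomputable def maxDeg {V : Type*} (G : SimpleGraph V) : ℕ :=
  sSup (Set.range (deg G))

/-- The largest eigenvalue of the Laplacian matrix `L = D - A`. -/
noncomputable def lapMax {V : Type*} [Fintype V] (G : SimpleGraph V) : ℝ :=
  letI := Classical.decEq V
  letI := Classical.decRel G.Adj
  ⨆ i, (SimpleGraph.posSemidef_lapMatrix ℝ G).1.eigenvalues i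

/-- The derived graph: the induced subgraph on the vertices of non-maximal degree. -/
noncomputable def derived {V : Type*} (G : SimpleGraph V) :
    SimpleGraph {v : V | deg G v < maxDeg G} :=
  G.induce {v : V | deg G v < maxDeg G}

section AuxSpectral

set_option linter.unusedSectionVars false

open Matrix

lemma rayleigh_aux {n : Type*} [Fintype n] [DecidableEq n] {A : Matrix n n ℝ}
    (hA : A.IsHermitian) {c : ℝ} (hc : ∀ i, hA.eigenvalues i ≤ c) (x : n → ℝ) :
    x ⬝ᵥ (A *ᵥ x) ≤ c * (x ⬝ᵥ x) := by
  set U : Matrix n n ℝ := (hA.eigenvectorUnitary : Matrix n n ℝ) with hU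
  set y : n → ℝ := Uᵀ *ᵥ x with hy
  have hstar : star U = Uᵀ := by
    rw [star_eq_conjTranspose, conjTranspose_eq_transpose_of_trivial]
  have hUUT : U * Uᵀ = 1 := by
    rw [← hstar]; exact (Matrix.mem_unitaryGroup_iff).mp hA.eigenvectorUnitary.2
  have hxx : y ⬝ᵥ y = x ⬝ᵥ x := by
    rw [hy, Matrix.dotProduct_mulVec, Matrix.vecMul_transpose, Matrix.mulVec_mulVec, hUUT,
      Matrix.one_mulVec]
  have hxU : x ᵥ* U = y := by rw [hy, Matrix.mulVec_transpose]
  have hmain : x ⬝ᵥ (A *ᵥ x) = ∑ i, hA.eigenvalues i * (y i * y i) := by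
    conv_lhs => rw [hA.spectral_theorem, Unitary.conjStarAlgAut_apply, ← hU, hstar]
    rw [← Matrix.mulVec_mulVec, ← hy, Matrix.dotProduct_mulVec, ← Matrix.vecMul_vecMul,
      hxU]
    simp [dotProduct, Matrix.vecMul_diagonal, mul_comm, mul_assoc, mul_left_comm]
  rw [hmain, ← hxx, dotProduct, Finset.mul_sum]
  apply Finset.sum_le_sum
  intro i _
  exact mul_le_mul_of_nonneg_right (hc i) (mul_self_nonneg _)

variable {V : Type*} [Fintype V] (G : SimpleGraph V)

lemma deg_eq [DecidableRel G.Adj] (v : V) : deg G v = G.degree v := by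
  rw [deg, SimpleGraph.degree, SimpleGraph.neighborFinset_def, Set.ncard_eq_toFinset_card']

lemma deg_le_maxDeg (v : V) : deg G v ≤ maxDeg G :=
  le_csSup ((Set.finite_range _).bddAbove) ⟨v, rfl⟩

lemma minDeg_le_deg (v : V) : minDeg G ≤ deg G v := Nat.sInf_le ⟨v, rfl⟩

lemma exists_deg_eq_maxDeg [Nonempty V] : ∃ v, deg G v = maxDeg G := by
  exact Nat.sSup_mem (s := Set.range (deg G)) (Set.range_nonempty _)
    ((Set.finite_range _).bddAbove)

lemma lap_rayleigh (x : V → ℝ) :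
    letI := Classical.decEq V
    letI := Classical.decRel G.Adj
    x ⬝ᵥ (G.lapMatrix ℝ *ᵥ x) ≤ lapMax G * (x ⬝ᵥ x) := by
  letI := Classical.decEq V
  letI := Classical.decRel G.Adj
  exact rayleigh_aux _ (fun i => le_ciSup ((Set.finite_range _).bddAbove) i) x

lemma maxDeg_add_one_le_lapMax (hne : ∃ v w, G.Adj v w) :
    (maxDeg G : ℝ) + 1 ≤ lapMax G := by
  letI := Classical.decEq V
  letI := Classical.decRel G.Adj
  obtain ⟨a, b, hab⟩ := hne
  haveI : Nonempty V := ⟨a⟩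
  obtain ⟨v, hv⟩ := exists_deg_eq_maxDeg G
  have hdeg : G.degree v = maxDeg G := by rw [← deg_eq, hv]
  have hD1 : 1 ≤ maxDeg G := by
    have h0 : 0 < G.degree a := by
      rw [SimpleGraph.degree_pos_iff_exists_adj]; exact ⟨b, hab⟩
    calc 1 ≤ G.degree a := h0
    _ = deg G a := (deg_eq G a).symm
    _ ≤ maxDeg G := deg_le_maxDeg G a
  set D : ℝ := (maxDeg G : ℝ) with hDdef
  have hDpos : (1:ℝ) ≤ D := by rw [hDdef]; exact_mod_cast hD1
  set x : V → ℝ := fun u => if u = v then D else if G.Adj v u then -1 else 0 with hx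
  have hxv : x v = D := by simp [hx]
  have hxadj : ∀ u, G.Adj v u → x u = -1 := by
    intro u h
    have hu : u ≠ v := fun e => (G.irrefl (e ▸ h))
    simp [hx, hu, h]
  have hsum : ∀ c : ℝ, ∑ u, (if G.Adj v u then c else 0) = D * c := by
    intro c
    calc ∑ u, (if G.Adj v u then c else 0) = ∑ u, (if G.Adj v u then (1:ℝ) else 0) * c := by
          simp [ite_mul]
    _ = (∑ u, if G.Adj v u then (1:ℝ) else 0) * c := by rw [Finset.sum_mul]
    _ = (G.degree v : ℝ) * c := by rw [← SimpleGraph.degree_eq_sum_if_adj]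
    _ = D * c := by rw [hdeg]
  have hxx : x ⬝ᵥ x = D * (D + 1) := by
    have hpt : ∀ u, x u * x u = (if u = v then D*D else 0) + (if G.Adj v u then 1 else 0) := by
      intro u
      by_cases h1 : u = v
      · subst h1; simp [hxv, G.irrefl]
      · by_cases h2 : G.Adj v u <;> simp [hx, h1, h2]
    rw [dotProduct]
    simp_rw [hpt]
    rw [Finset.sum_add_distrib, Finset.sum_ite_eq' univ v, hsum 1]
    simp; ring
  -- quadratic form
  set f : V → V → ℝ := fun i j => if G.Adj i j then (x i - x j)^2 else 0 with hf
  have hfnn : ∀ i j, 0 ≤ f i j := by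
    intro i j; by_cases h : G.Adj i j <;> simp [hf, h, sq_nonneg]
  have hrow : ∀ j, f v j = if G.Adj v j then (D+1)^2 else 0 := by
    intro j; by_cases h : G.Adj v j
    · simp only [hf, if_pos h, hxv, hxadj j h]; ring
    · simp [hf, h]
  have hcol : ∀ i, f i v = if G.Adj i v then (D+1)^2 else 0 := by
    intro i; by_cases h : G.Adj i v
    · have h' : G.Adj v i := h.symm
      simp only [hf, if_pos h, hxv, hxadj i h']; ring
    · simp [hf, h]
  have hq : x ⬝ᵥ (G.lapMatrix ℝ *ᵥ x) = (∑ i, ∑ j, f i j)/2 := by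
    rw [← Matrix.toLinearMap₂'_apply', SimpleGraph.lapMatrix_toLinearMap₂']
  have hlow : D * (D+1)^2 ≤ x ⬝ᵥ (G.lapMatrix ℝ *ᵥ x) := by
    have hsplit : ∑ i, ∑ j, f i j = (∑ j, f v j) + ∑ i ∈ univ.erase v, ∑ j, f i j :=
      (Finset.add_sum_erase _ _ (mem_univ v)).symm
    have h1 : ∑ j, f v j = D * (D+1)^2 := by simp_rw [hrow]; exact hsum _
    have h2 : D * (D+1)^2 ≤ ∑ i ∈ univ.erase v, ∑ j, f i j := by
      have step : ∀ i ∈ univ.erase v, f i v ≤ ∑ j, f i j := by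
        intro i _
        exact Finset.single_le_sum (fun j _ => hfnn i j) (mem_univ v)
      calc D * (D+1)^2 = ∑ i, f i v := by
            simp_rw [hcol]
            rw [Finset.sum_congr rfl (fun i _ => if_congr (G.adj_comm i v) rfl rfl :
              ∀ i ∈ univ, (if G.Adj i v then (D+1)^2 else 0) = if G.Adj v i then (D+1)^2 else 0)]
            exact (hsum _).symm
      _ = f v v + ∑ i ∈ univ.erase v, f i v := (Finset.add_sum_erase _ _ (mem_univ v)).symm
      _ = ∑ i ∈ univ.erase v, f i v := by simp [hf, G.irrefl]
      _ ≤ _ := Finset.sum_le_sum step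
    calc D * (D+1)^2 = (D * (D+1)^2 + D * (D+1)^2)/2 := by ring
    _ ≤ ((∑ j, f v j) + ∑ i ∈ univ.erase v, ∑ j, f i j)/2 := by
        apply div_le_div_of_nonneg_right ?_ (by norm_num)
        exact add_le_add (le_of_eq h1.symm) h2
    _ = x ⬝ᵥ (G.lapMatrix ℝ *ᵥ x) := by rw [hq, hsplit]
  have hupper := lap_rayleigh G x
  have : D * (D+1)^2 ≤ lapMax G * (D * (D+1)) := by
    rw [← hxx]; exact le_trans hlow hupper
  have hpos : 0 < D * (D+1) := by nlinarith
  nlinarith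

lemma godsil_newman (t : Finset V) (hind : ∀ v ∈ t, ∀ w ∈ t, ¬ G.Adj v w)
    (hne : ∃ v w, G.Adj v w) :
    (minDeg G : ℝ) * (Fintype.card V : ℝ) ≤ lapMax G * ((Fintype.card V : ℝ) - t.card) := by
  letI := Classical.decEq V
  letI := Classical.decRel G.Adj
  obtain ⟨a, b, hab⟩ := hne
  haveI : Nonempty V := ⟨a⟩
  have hmuD : (maxDeg G : ℝ) + 1 ≤ lapMax G := maxDeg_add_one_le_lapMax G ⟨a, b, hab⟩
  have hdm : minDeg G ≤ maxDeg G := le_trans (minDeg_le_deg G a) (deg_le_maxDeg G a)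
  have hμδ : (minDeg G : ℝ) ≤ lapMax G := by
    have : (minDeg G : ℝ) ≤ (maxDeg G : ℝ) := by exact_mod_cast hdm
    linarith
  rcases Finset.eq_empty_or_nonempty t with ht | ht
  · subst ht
    simp only [Finset.card_empty, Nat.cast_zero, sub_zero]
    exact mul_le_mul_of_nonneg_right hμδ (by positivity)
  -- t nonempty
  have hklt : t.card < Fintype.card V := by
    apply Finset.card_lt_card
    rw [Finset.ssubset_univ_iff]
    intro h
    exact hind a (h ▸ mem_univ a) b (h ▸ mem_univ b) hab
  set N : ℝ := (Fintype.card V : ℝ) with hN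
  set k : ℝ := (t.card : ℝ) with hk
  have hNpos : 0 < N := by
    rw [hN]; exact_mod_cast Fintype.card_pos
  have hkpos : 0 < k := by
    rw [hk]; exact_mod_cast Finset.card_pos.mpr ht
  set x : V → ℝ := fun v => (if v ∈ t then 1 else 0) - k/N with hx
  have hxx : x ⬝ᵥ x = k * (N - k) / N := by
    have hpt : ∀ v, x v * x v =
        (if v ∈ t then (1:ℝ) else 0) * (1 - 2*(k/N)) + (k/N)^2 := by
      intro v
      by_cases h : v ∈ t <;> simp [hx, h] <;> ring
    rw [dotProduct]
    simp_rw [hpt]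
    rw [Finset.sum_add_distrib, ← Finset.sum_mul]
    have hsb : ∑ v, (if v ∈ t then (1:ℝ) else 0) = k := by
      rw [Finset.sum_boole]; simp [hk]
    rw [hsb, Finset.sum_const, Finset.card_univ, nsmul_eq_mul, ← hN]
    field_simp
    ring
  set f : V → V → ℝ := fun i j => if G.Adj i j then (x i - x j)^2 else 0 with hf
  have hfnn : ∀ i j, 0 ≤ f i j := by
    intro i j; by_cases h : G.Adj i j <;> simp [hf, h, sq_nonneg]
  have hpt2 : ∀ i ∈ t, ∀ j, f i j = if G.Adj i j then 1 else 0 := by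
    intro i hi j
    by_cases h : G.Adj i j
    · have hj : j ∉ t := fun hj => hind i hi j hj h
      simp [hf, h, hx, hi, hj]
    · simp [hf, h]
  have hpt3 : ∀ j ∈ t, ∀ i, f i j = if G.Adj i j then 1 else 0 := by
    intro j hj i
    by_cases h : G.Adj i j
    · have hi : i ∉ t := fun hi => hind j hj i hi h.symm
      have : x i - x j = -1 := by simp [hx, hi, hj]; ring
      simp [hf, h, this]
    · simp [hf, h]
  have hdegree : ∀ i, (minDeg G : ℝ) ≤ (G.degree i : ℝ) := by
    intro i
    have : minDeg G ≤ G.degree i := by rw [← deg_eq]; exact minDeg_le_deg G i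
    exact_mod_cast this
  have hrowt : ∀ i ∈ t, (minDeg G : ℝ) ≤ ∑ j, f i j := by
    intro i hi
    have : ∑ j, f i j = (G.degree i : ℝ) := by
      simp_rw [hpt2 i hi]
      rw [SimpleGraph.degree_eq_sum_if_adj]
    rw [this]; exact hdegree i
  have hcolt : ∀ j ∈ t, (minDeg G : ℝ) ≤ ∑ i ∈ univ \ t, f i j := by
    intro j hj
    have h0 : ∀ i ∈ t, f i j = 0 := by
      intro i hi
      rw [hpt3 j hj i, if_neg (fun h => hind j hj i hi h.symm)]
    have : ∑ i ∈ univ \ t, f i j = (G.degree j : ℝ) := by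
      have hsplit : ∑ i ∈ univ \ t, f i j + ∑ i ∈ t, f i j = ∑ i, f i j :=
        Finset.sum_sdiff (Finset.subset_univ t)
      rw [Finset.sum_eq_zero h0, add_zero] at hsplit
      rw [hsplit]
      simp_rw [hpt3 j hj]
      rw [Finset.sum_congr rfl (fun i _ => if_congr (G.adj_comm i j) rfl rfl)]
      rw [SimpleGraph.degree_eq_sum_if_adj]
    rw [this]; exact hdegree j
  have hbig : 2 * ((minDeg G : ℝ) * k) ≤ ∑ i, ∑ j, f i j := by
    have hsplit : ∑ i ∈ univ \ t, (∑ j, f i j) + ∑ i ∈ t, (∑ j, f i j) = ∑ i, ∑ j, f i j :=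
      Finset.sum_sdiff (Finset.subset_univ t)
    have h1 : (minDeg G : ℝ) * k ≤ ∑ i ∈ t, ∑ j, f i j := by
      calc (minDeg G : ℝ) * k = ∑ _i ∈ t, (minDeg G : ℝ) := by
            rw [Finset.sum_const, hk]; ring
      _ ≤ ∑ i ∈ t, ∑ j, f i j := Finset.sum_le_sum hrowt
    have h2 : (minDeg G : ℝ) * k ≤ ∑ i ∈ univ \ t, ∑ j, f i j := by
      have ha : ∑ i ∈ univ \ t, ∑ j ∈ t, f i j ≤ ∑ i ∈ univ \ t, ∑ j, f i j := by
        apply Finset.sum_le_sum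
        intro i _
        exact Finset.sum_le_sum_of_subset_of_nonneg (Finset.subset_univ t)
          (fun j _ _ => hfnn i j)
      have hb : (minDeg G : ℝ) * k ≤ ∑ i ∈ univ \ t, ∑ j ∈ t, f i j := by
        rw [Finset.sum_comm]
        calc (minDeg G : ℝ) * k = ∑ _j ∈ t, (minDeg G : ℝ) := by
              rw [Finset.sum_const, hk]; ring
        _ ≤ _ := Finset.sum_le_sum hcolt
      linarith
    linarith
  have hq : x ⬝ᵥ (G.lapMatrix ℝ *ᵥ x) = (∑ i, ∑ j, f i j)/2 := by
    rw [← Matrix.toLinearMap₂'_apply', SimpleGraph.lapMatrix_toLinearMap₂']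
  have hupper := lap_rayleigh G x
  rw [hxx, hq] at hupper
  have hkey : (minDeg G : ℝ) * k ≤ lapMax G * (k * (N - k) / N) := by linarith
  -- multiply through
  have hfin : (minDeg G : ℝ) * N * k ≤ lapMax G * (N - k) * k := by
    have := mul_le_mul_of_nonneg_right hkey (le_of_lt hNpos)
    calc (minDeg G : ℝ) * N * k = (minDeg G : ℝ) * k * N := by ring
    _ ≤ lapMax G * (k * (N - k) / N) * N := this
    _ = lapMax G * (N - k) * k := by field_simp
  have := le_of_mul_le_mul_right hfin hkpos
  linarith

lemma exists_indep_card {W : Type*} [Fintype W] (G' : SimpleGraph W) :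
    ∃ s : Finset W, (∀ v ∈ s, ∀ w ∈ s, ¬ G'.Adj v w) ∧ s.card = indepNum G' := by
  have hbdd : BddAbove {n | ∃ s : Finset W, (∀ v ∈ s, ∀ w ∈ s, ¬ G'.Adj v w) ∧ s.card = n} := by
    refine ⟨Fintype.card W, fun m hm => ?_⟩
    obtain ⟨s, -, rfl⟩ := hm
    exact Finset.card_le_univ s
  have h0 : (0 : ℕ) ∈ {n | ∃ s : Finset W, (∀ v ∈ s, ∀ w ∈ s, ¬ G'.Adj v w) ∧ s.card = n} :=
    ⟨∅, by simp, rfl⟩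
  have := Nat.sSup_mem ⟨0, h0⟩ hbdd
  obtain ⟨s, hs, hcard⟩ := this
  exact ⟨s, hs, hcard⟩

/-- extract an independent set in `G` of size `indepNum (derived G)`, all of whose
vertices have non-maximal degree. -/
lemma exists_indep_derived {V : Type*} [Fintype V] (G : SimpleGraph V) :
    ∃ t : Finset V, (∀ v ∈ t, ∀ w ∈ t, ¬ G.Adj v w) ∧ (∀ v ∈ t, deg G v < maxDeg G) ∧
      t.card = indepNum (derived G) := by
  classical
  obtain ⟨s, hs, hcard⟩ := exists_indep_card (derived G)
  refine ⟨s.image Subtype.val, ?_, ?_, ?_⟩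
  · intro v hv w hw hadj
    obtain ⟨v', hv', rfl⟩ := Finset.mem_image.mp hv
    obtain ⟨w', hw', rfl⟩ := Finset.mem_image.mp hw
    exact hs v' hv' w' hw' (by simpa [derived] using hadj)
  · intro v hv
    obtain ⟨v', -, rfl⟩ := Finset.mem_image.mp hv
    exact v'.2
  · rw [Finset.card_image_of_injective _ Subtype.val_injective, hcard]

end AuxSpectral

set_option maxHeartbeats 1000000 in
/-- **Monotony** (Lemma 3): the spectral bounding function of the relative bound
is strictly increasing on `[λ_max, ∞)`. -/
theorem relative_bounding_function_strictMonoOn {V : Type*} [Fintype V] (G : SimpleGraph V)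
    (hne : ∃ v w, G.Adj v w) :
    StrictMonoOn
      (fun lam : ℝ => (Fintype.card V : ℝ) * (1 - (maxDeg G : ℝ) / lam)
        + (indepNum (derived G) : ℝ) * ((maxDeg G : ℝ) - (minDeg G : ℝ)) / (lam - (minDeg G : ℝ)))
      (Set.Ici (lapMax G)) := by
  classical
  obtain ⟨v0, w0, hvw⟩ := hne
  haveI : Nonempty V := ⟨v0⟩
  obtain ⟨t, htind, htdeg, htcard⟩ := exists_indep_derived G
  set nn : ℝ := (Fintype.card V : ℝ) with hnn
  set Dd : ℝ := (maxDeg G : ℝ) with hDd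
  set dd : ℝ := (minDeg G : ℝ) with hdd
  set al : ℝ := (indepNum (derived G) : ℝ) with hal
  set mu : ℝ := lapMax G with hmu
  have hΔ1 : (1:ℝ) ≤ Dd := by
    rw [hDd]
    have h0 : 0 < G.degree v0 := by
      rw [SimpleGraph.degree_pos_iff_exists_adj]; exact ⟨w0, hvw⟩
    have : 1 ≤ maxDeg G := le_trans h0 (by rw [← deg_eq]; exact deg_le_maxDeg G v0)
    exact_mod_cast this
  have hδΔ : dd ≤ Dd := by
    rw [hdd, hDd]
    have : minDeg G ≤ maxDeg G := le_trans (minDeg_le_deg G v0) (deg_le_maxDeg G v0)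
    exact_mod_cast this
  have hδ0 : 0 ≤ dd := by rw [hdd]; positivity
  have hμ : Dd + 1 ≤ mu := maxDeg_add_one_le_lapMax G ⟨v0, w0, hvw⟩
  have hμpos : 0 < mu := by linarith
  have hμδpos : 0 < mu - dd := by linarith
  have hn1 : (1:ℝ) ≤ nn := by rw [hnn]; exact_mod_cast Fintype.card_pos
  have hα0 : 0 ≤ al := by rw [hal]; positivity
  have hαn : al < nn := by
    obtain ⟨vm, hvm⟩ := exists_deg_eq_maxDeg G
    have hvmnot : vm ∉ t := fun h => absurd hvm (Nat.ne_of_lt (htdeg vm h))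
    have : t.card < Fintype.card V := by
      apply Finset.card_lt_card
      rw [Finset.ssubset_univ_iff]
      intro h
      exact hvmnot (h ▸ mem_univ vm)
    rw [hal, hnn, ← htcard]
    exact_mod_cast this
  have hgn : dd * nn ≤ mu * (nn - al) := by
    have := godsil_newman G t htind ⟨v0, w0, hvw⟩
    rw [htcard] at this
    exact this
  -- Key inequality at mu
  have hK : al * (Dd - dd) * mu^2 < nn * Dd * (mu - dd)^2 := by
    rcases Nat.eq_zero_or_pos (minDeg G) with h0 | h1
    · have hδe : dd = 0 := by rw [hdd, h0]; norm_num
      rw [hδe]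
      have hmusq : (0:ℝ) < mu^2 := by positivity
      have : al * Dd < nn * Dd := by nlinarith
      nlinarith
    · have hδ1 : (1:ℝ) ≤ dd := by rw [hdd]; exact_mod_cast h1
      have hΔμ : Dd < mu := by linarith
      have h2 : al * mu ≤ nn * (mu - dd) := by nlinarith
      calc al * (Dd - dd) * mu^2 = (al * mu) * ((Dd - dd) * mu) := by ring
      _ ≤ (nn * (mu - dd)) * ((Dd - dd) * mu) := by
          apply mul_le_mul_of_nonneg_right h2
          have : 0 ≤ Dd - dd := by linarith
          positivity
      _ < (nn * (mu - dd)) * (Dd * (mu - dd)) := by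
          apply mul_lt_mul_of_pos_left ?_ (by positivity)
          nlinarith
      _ = nn * Dd * (mu - dd)^2 := by ring
  -- strict monotonicity
  intro a ha b hb hab
  simp only [Set.mem_Ici] at ha hb
  have hapos : 0 < a := lt_of_lt_of_le hμpos ha
  have hbpos : 0 < b := lt_of_lt_of_le hμpos hb
  have haδ : 0 < a - dd := by linarith
  have hbδ : 0 < b - dd := by linarith
  have mean1 : a * (mu - dd) ≤ mu * (a - dd) := by
    nlinarith [mul_nonneg hδ0 (by linarith : (0:ℝ) ≤ a - mu)]
  have mean2 : b * (mu - dd) ≤ mu * (b - dd) := by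
    nlinarith [mul_nonneg hδ0 (by linarith : (0:ℝ) ≤ b - mu)]
  have prodineq : (mu - dd)^2 * (a*b) ≤ mu^2 * ((a - dd)*(b - dd)) := by
    calc (mu - dd)^2 * (a*b) = (a*(mu - dd)) * (b*(mu - dd)) := by ring
    _ ≤ (mu*(a - dd)) * (mu*(b - dd)) := mul_le_mul mean1 mean2 (by positivity) (by positivity)
    _ = mu^2 * ((a - dd)*(b - dd)) := by ring
  have key2 : al * (Dd - dd) * (a*b) < nn * Dd * ((a - dd)*(b - dd)) := by
    have habpos : 0 < a * b := by positivity
    have c1 : (al * (Dd - dd) * (a*b)) * mu^2 < (nn * Dd * ((a - dd)*(b - dd))) * mu^2 := by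
      calc (al * (Dd - dd) * (a*b)) * mu^2 = (al * (Dd - dd) * mu^2) * (a*b) := by ring
      _ < (nn * Dd * (mu - dd)^2) * (a*b) := by
          apply mul_lt_mul_of_pos_right hK habpos
      _ = (nn * Dd) * ((mu - dd)^2 * (a*b)) := by ring
      _ ≤ (nn * Dd) * (mu^2 * ((a - dd)*(b - dd))) := by
          apply mul_le_mul_of_nonneg_left prodineq
          have : (0:ℝ) ≤ Dd := by linarith
          positivity
      _ = (nn * Dd * ((a - dd)*(b - dd))) * mu^2 := by ring
    exact lt_of_mul_lt_mul_right c1 (by positivity)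
  show nn * (1 - Dd / a) + al * (Dd - dd) / (a - dd)
      < nn * (1 - Dd / b) + al * (Dd - dd) / (b - dd)
  have hdiff : (nn * (1 - Dd / b) + al * (Dd - dd) / (b - dd))
      - (nn * (1 - Dd / a) + al * (Dd - dd) / (a - dd))
      = (b - a) * (nn * Dd * ((a - dd)*(b - dd)) - al * (Dd - dd) * (a*b))
        / (a * b * ((a - dd)*(b - dd))) := by
    field_simp
    ring
  have hpos : 0 < (b - a) * (nn * Dd * ((a - dd)*(b - dd)) - al * (Dd - dd) * (a*b))
        / (a * b * ((a - dd)*(b - dd))) := by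
    apply div_pos
    · apply mul_pos (by linarith)
      linarith
    · positivity
  linarith [hdiff ▸ hpos]
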